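/- For every root γ ∈ K of the derivative f' there exist indices i ≠ j in {1, …, d} such that O(γ, α_k) ≤ O(γ, α_i) for all k = 1, …, d and O(γ, α_i) = O(α_i, α_j). (Note that γ ≠ α_k for all k, since f has no multiple roots, so all contact orders involved are finite.) -/

import Mathlib

open HahnSeries Polynomial Finset

private lemma hahn_lc_mul {x y : HahnSeries ℚ ℂ} (hx : x ≠ 0) (hy : y ≠ 0) :
    (x * y).leadingCoeff = x.leadingCoeff * y.leadingCoeff := by
  rw [HahnSeries.leadingCoeff_eq, HahnSeries.order_mul hx hy,
    HahnSeries.coeff_mul_order_add_order]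

private lemma hahn_order_lc_prod {ι : Type*} (s : Finset ι) (g : ι → HahnSeries ℚ ℂ)
    (h : ∀ i ∈ s, g i ≠ 0) :
    (∏ i ∈ s, g i).order = ∑ i ∈ s, (g i).order ∧
      (∏ i ∈ s, g i).leadingCoeff = ∏ i ∈ s, (g i).leadingCoeff := by
  classical
  induction s using Finset.induction_on with
  | empty => simp [HahnSeries.order_one, HahnSeries.leadingCoeff_one]
  | @insert a s ha ih =>
    have hga : g a ≠ 0 := h a (mem_insert_self a s)
    have hs : ∀ i ∈ s, g i ≠ 0 := fun i hi => h i (mem_insert_of_mem hi)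
    have hprod : (∏ i ∈ s, g i) ≠ 0 := Finset.prod_ne_zero_iff.2 hs
    obtain ⟨ho, hl⟩ := ih hs
    rw [Finset.prod_insert ha, Finset.sum_insert ha,
      Finset.prod_insert ha, HahnSeries.order_mul hga hprod, hahn_lc_mul hga hprod, ho, hl]
    exact ⟨rfl, rfl⟩

private lemma hahn_coeff_sum {ι : Type*} (s : Finset ι) (g : ι → HahnSeries ℚ ℂ) (a : ℚ) :
    (∑ i ∈ s, g i).coeff a = ∑ i ∈ s, (g i).coeff a :=
  map_sum (HahnSeries.coeff.addMonoidHom a) g s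

private lemma deriv_prod_linear {d : ℕ} (α : Fin d → HahnSeries ℚ ℂ) (s : Finset (Fin d)) :
    Polynomial.derivative (∏ i ∈ s, (Polynomial.X - Polynomial.C (α i))) =
      ∑ i ∈ s, ∏ j ∈ s.erase i, (Polynomial.X - Polynomial.C (α j)) := by
  classical
  induction s using Finset.induction_on with
  | empty => simp
  | @insert a s ha ih =>
    rw [Finset.prod_insert ha, derivative_mul, ih, Finset.sum_insert ha,
      Finset.erase_insert ha]
    simp only [derivative_sub, derivative_X, derivative_C, sub_zero, one_mul]
    rw [Finset.mul_sum]
    congr 1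
    refine Finset.sum_congr rfl fun i hi => ?_
    have hia : i ≠ a := fun h => ha (h ▸ hi)
    rw [Finset.erase_insert_of_ne hia.symm, Finset.prod_insert (fun h => ha (Finset.mem_of_mem_erase h))]

theorem kuo_lu_polar_grows_from_pseudo_ball
    (d : ℕ) (hd : 2 ≤ d)
    (α : Fin d → HahnSeries ℚ ℂ) (hinj : Function.Injective α)
    (f : Polynomial (HahnSeries ℚ ℂ))
    (hf : f = ∏ i, (Polynomial.X - Polynomial.C (α i)))
    (hmonic : f.Monic) (hdeg : f.natDegree = d)
    (γ : HahnSeries ℚ ℂ) (hγ : (Polynomial.derivative f).IsRoot γ) :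
    ∃ i j : Fin d, i ≠ j ∧
      (∀ k : Fin d, (γ - α k).order ≤ (γ - α i).order) ∧
      (γ - α i).order = (α i - α j).order := by
  classical
  set β : Fin d → HahnSeries ℚ ℂ := fun k => γ - α k with hβdef
  -- the evaluation identity
  have heval : ∑ i : Fin d, ∏ j ∈ Finset.univ.erase i, β j = 0 := by
    have := hγ
    rw [Polynomial.IsRoot, hf, deriv_prod_linear α Finset.univ] at this
    simpa [Polynomial.eval_finset_sum, Polynomial.eval_prod] using this
  -- γ is not a root of f
  have hβne : ∀ k, β k ≠ 0 := by
    intro k hk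
    have hγα : γ = α k := by rwa [hβdef, sub_eq_zero] at hk
    have hzero : ∀ i ∈ Finset.univ, i ≠ k → (∏ j ∈ Finset.univ.erase i, β j) = 0 := by
      intro i _ hik
      exact Finset.prod_eq_zero (Finset.mem_erase.2 ⟨fun h => hik h.symm, Finset.mem_univ k⟩) hk
    have hsingle : ∑ i : Fin d, ∏ j ∈ Finset.univ.erase i, β j
        = ∏ j ∈ Finset.univ.erase k, β j := by
      exact Finset.sum_eq_single k hzero (fun h => absurd (Finset.mem_univ k) h)
    rw [hsingle] at heval
    have : ∀ j ∈ Finset.univ.erase k, β j ≠ 0 := by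
      intro j hj
      have hjk : j ≠ k := (Finset.mem_erase.1 hj).1
      rw [hβdef]
      simp only [hγα]
      exact sub_ne_zero.2 (fun h => hjk (hinj h).symm)
    exact (Finset.prod_ne_zero_iff.2 this) heval
  -- pick i maximizing the order
  obtain ⟨i, -, hmax⟩ := Finset.exists_max_image Finset.univ (fun k => (β k).order)
    ⟨⟨0, by omega⟩, Finset.mem_univ _⟩
  have hmax' : ∀ k : Fin d, (β k).order ≤ (β i).order := fun k => hmax k (Finset.mem_univ k)
  set m : ℚ := (β i).order with hm
  set S : Finset (Fin d) := Finset.univ.filter (fun k => (β k).order = m) with hS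
  have hiS : i ∈ S := by simp [hS]; rfl
  set T : ℚ := ∑ k : Fin d, (β k).order with hT
  -- order and leading coeff of each product
  have hPi : ∀ k : Fin d, (∏ j ∈ Finset.univ.erase k, β j).order = T - (β k).order ∧
      (∏ j ∈ Finset.univ.erase k, β j).leadingCoeff
        = ∏ j ∈ Finset.univ.erase k, (β j).leadingCoeff := by
    intro k
    obtain ⟨ho, hl⟩ := hahn_order_lc_prod (Finset.univ.erase k) β (fun j _ => hβne j)
    refine ⟨?_, hl⟩
    rw [ho, eq_sub_iff_add_eq, hT]
    exact Finset.sum_erase_add _ _ (Finset.mem_univ k)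
  -- the coefficient of the sum at T - m vanishes
  have hcoeff : ∑ k : Fin d, (∏ j ∈ Finset.univ.erase k, β j).coeff (T - m) = 0 := by
    rw [← hahn_coeff_sum, heval, HahnSeries.coeff_zero]
  have hcoeff_notS : ∀ k, k ∉ S → (∏ j ∈ Finset.univ.erase k, β j).coeff (T - m) = 0 := by
    intro k hk
    have hkm : (β k).order < m := lt_of_le_of_ne (hmax' k) (by simpa [hS] using hk)
    exact HahnSeries.coeff_eq_zero_of_lt_order (by rw [(hPi k).1]; linarith)
  have hcoeff_S : ∀ k ∈ S, (∏ j ∈ Finset.univ.erase k, β j).coeff (T - m)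
      = ∏ j ∈ Finset.univ.erase k, (β j).leadingCoeff := by
    intro k hk
    have hkm : (β k).order = m := by simpa [hS] using hk
    have : T - m = (∏ j ∈ Finset.univ.erase k, β j).order := by rw [(hPi k).1, hkm]
    rw [this, ← HahnSeries.leadingCoeff_eq, (hPi k).2]
  have hsumS : ∑ k ∈ S, ∏ j ∈ Finset.univ.erase k, (β j).leadingCoeff = 0 := by
    rw [← Finset.sum_congr rfl hcoeff_S]
    rw [← hcoeff]
    exact (Finset.sum_subset (Finset.subset_univ S)
      (fun k _ hk => hcoeff_notS k hk)).symm ▸ rfl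
  -- leading coefficients
  set c : Fin d → ℂ := fun k => (β k).leadingCoeff with hc
  have hcne : ∀ k, c k ≠ 0 := fun k => HahnSeries.leadingCoeff_ne_zero.2 (hβne k)
  have hCne : (∏ j : Fin d, c j) ≠ 0 := Finset.prod_ne_zero_iff.2 (fun j _ => hcne j)
  -- turn the sum into a sum of inverses
  have hinv : ∑ k ∈ S, (c k)⁻¹ = 0 := by
    have key : ∀ k ∈ S, ∏ j ∈ Finset.univ.erase k, c j = (∏ j : Fin d, c j) * (c k)⁻¹ := by
      intro k _
      rw [← Finset.prod_erase_mul Finset.univ c (Finset.mem_univ k), mul_assoc,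
        mul_inv_cancel₀ (hcne k), mul_one]
    rw [Finset.sum_congr rfl key, ← Finset.mul_sum] at hsumS
    exact (mul_eq_zero.1 hsumS).resolve_left hCne
  -- find j in S with different leading coefficient
  have hexj : ∃ j ∈ S, c j ≠ c i := by
    by_contra hcon
    push_neg at hcon
    have : ∑ k ∈ S, (c k)⁻¹ = (S.card : ℂ) * (c i)⁻¹ := by
      rw [Finset.sum_congr rfl (fun k hk => by rw [hcon k hk]), Finset.sum_const, nsmul_eq_mul]
    rw [this] at hinv
    rcases mul_eq_zero.1 hinv with h | h
    · have : S.card ≠ 0 := Finset.card_ne_zero_of_mem hiS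
      exact this (by exact_mod_cast h)
    · exact hcne i (inv_eq_zero.1 h ▸ rfl)
  obtain ⟨j, hjS, hcj⟩ := hexj
  have hji : j ≠ i := fun h => hcj (by rw [h])
  have hjm : (β j).order = m := by simpa [hS] using hjS
  refine ⟨i, j, hji.symm, hmax', ?_⟩
  -- α i - α j = β j - β i, with equal orders and distinct leading coefficients
  have hsub : α i - α j = β j - β i := by rw [hβdef]; ring
  have him : (β i).order = m := rfl
  -- coefficient of the difference at m
  have hdiff_coeff : (β j - β i).coeff m = c j - c i := by
    rw [HahnSeries.coeff_sub, hc]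
    simp only [HahnSeries.leadingCoeff_eq, hjm, him]
  have hdne : (β j - β i).coeff m ≠ 0 := by rw [hdiff_coeff]; exact sub_ne_zero.2 hcj
  have hne0 : β j - β i ≠ 0 := fun h => hdne (by rw [h, HahnSeries.coeff_zero])
  have hle : (β j - β i).order ≤ m := HahnSeries.order_le_of_coeff_ne_zero hdne
  have hge : m ≤ (β j - β i).order := by
    by_contra hlt
    push_neg at hlt
    have h1 : (β j).coeff ((β j - β i).order) = 0 :=
      HahnSeries.coeff_eq_zero_of_lt_order (by rw [hjm]; exact hlt)
    have h2 : (β i).coeff ((β j - β i).order) = 0 :=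
      HahnSeries.coeff_eq_zero_of_lt_order (by rw [him]; exact hlt)
    have := (HahnSeries.coeff_order_eq_zero.not.2 hne0)
    rw [HahnSeries.coeff_sub, h1, h2, sub_zero] at this
    exact this rfl
  rw [hsub]
  exact (le_antisymm hle hge).symm
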